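/- Let k ≥ 1 be an integer and G a strongly connected digraph with m arcs and Δ⁺(G) ≤ m − k. If m ≥ 3k, then the signless Laplacian spectral radius satisfies q(G) ≤ m − k + 1 + k/(m−k). -/

import Mathlib

open Matrix Finset ENNReal

/-- The outdegree of a vertex in a digraph given by its arc relation. -/
def outDeg {V : Type*} [Fintype V] (E : V → V → Prop) [DecidableRel E] (u : V) : ℕ :=
  (Finset.univ.filter (fun v => E u v)).card

/-- The maximum outdegree. -/
def maxOutDeg {V : Type*} [Fintype V] (E : V → V → Prop) [DecidableRel E] : ℕ :=
  Finset.univ.sup (outDeg E)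

/-- A simple digraph has no loops. -/
def IsSimpleDigraph {V : Type*} (E : V → V → Prop) : Prop := ∀ v, ¬ E v v

/-- Strong connectivity: every vertex reaches every other by a directed walk. -/
def StronglyConnected {V : Type*} (E : V → V → Prop) : Prop :=
  ∀ u v, Relation.ReflTransGen E u v

/-- The A_α matrix  α D + (1-α) A  of a digraph, over ℂ. -/
noncomputable def Aalpha {V : Type*} [Fintype V] [DecidableEq V] (α : ℝ)
    (E : V → V → Prop) [DecidableRel E] : Matrix V V ℂ :=
  (α : ℂ) • Matrix.diagonal (fun u => (outDeg E u : ℂ)) +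
    ((1 - α : ℝ) : ℂ) • Matrix.of (fun u v => if E u v then (1 : ℂ) else 0)

/-- The A_α spectral radius of a digraph. -/
noncomputable def lambdaAlpha {V : Type*} [Fintype V] [DecidableEq V] (α : ℝ)
    (E : V → V → Prop) [DecidableRel E] : ℝ≥0∞ :=
  spectralRadius ℂ (Aalpha α E)

/-- The signless Laplacian matrix D + A of a digraph, over ℂ. -/
noncomputable def signlessLaplacian {V : Type*} [Fintype V] [DecidableEq V]
    (E : V → V → Prop) [DecidableRel E] : Matrix V V ℂ :=
  Matrix.diagonal (fun u => (outDeg E u : ℂ)) +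
    Matrix.of (fun u v => if E u v then (1 : ℂ) else 0)

/-- The signless Laplacian spectral radius of a digraph. -/
noncomputable def qSpec {V : Type*} [Fintype V] [DecidableEq V]
    (E : V → V → Prop) [DecidableRel E] : ℝ≥0∞ :=
  spectralRadius ℂ (signlessLaplacian E)

theorem stmt_6 {V : Type*} [Fintype V] [DecidableEq V]
    (E : V → V → Prop) [DecidableRel E]
    (hsimple : IsSimpleDigraph E) (hsc : StronglyConnected E)
    (k m : ℕ) (hk : 1 ≤ k) (hm : m = ∑ v, outDeg E v)
    (hΔ : maxOutDeg E ≤ m - k) (hmk : 3 * k ≤ m) :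
    qSpec E ≤ ENNReal.ofReal
      ((m : ℝ) - k + 1 + (k : ℝ) / ((m : ℝ) - k)) := by
  classical
  have hkm : k ≤ m := by omega
  set M : ℝ := (m : ℝ) with hM
  set K : ℝ := (k : ℝ) with hK
  have hK1 : (1 : ℝ) ≤ K := by rw [hK]; exact_mod_cast hk
  have hM3 : 3 * K ≤ M := by rw [hK, hM]; exact_mod_cast hmk
  have hP0 : (0 : ℝ) < M - K := by linarith
  have hP2 : (2 : ℝ) ≤ M - K := by linarith
  set t : ℝ := M - K + 1 + K / (M - K) with htdef
  have htnonneg : 0 ≤ t := by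
    have : 0 ≤ K / (M - K) := div_nonneg (by linarith) hP0.le
    simp only [htdef]; linarith
  -- the key real inequality
  have key : ∀ D S : ℝ, (D = 1 ∨ 2 ≤ D) → D ≤ M - K → S ≤ D * (M - K) → S + D ≤ M →
      D ^ 2 + S ≤ t * D := by
    intro D S hD1 hDP hS1 hS2
    rcases hD1.symm with hD2 | hD2
    · -- 2 ≤ D : use S ≤ M - D
      have hPt : (M - K) * t = (M - K) * (M - K + 1) + K := by
        have : (M - K) * (K / (M - K)) = K := by field_simp
        simp only [htdef]; ring_nf; ring_nf at this; linarith
      have hgoal : (M - K) * (D ^ 2 + S) ≤ (M - K) * (t * D) := by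
        have hSle : S ≤ M - D := by linarith
        have h1 : 0 ≤ (M - K) * (D - 2) * (M - K - D) :=
          mul_nonneg (mul_nonneg hP0.le (by linarith)) (by linarith)
        have h2 : 0 ≤ K * D := mul_nonneg (by linarith) (by linarith)
        have h3 : 0 ≤ (M - K - K) * (M - K) := mul_nonneg (by linarith) hP0.le
        have hMS : (M - K) * S ≤ (M - K) * (M - D) :=
          mul_le_mul_of_nonneg_left hSle hP0.le
        have hexp : (M - K) * (t * D) = ((M - K) * (M - K + 1) + K) * D := by
          rw [← mul_assoc, hPt]
        rw [hexp]
        nlinarith [h1, h2, h3, hMS]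
      exact le_of_mul_le_mul_left hgoal hP0
    · -- D = 1 : use S ≤ D * (M-K)
      subst hD2
      have hKP : 0 ≤ K / (M - K) := div_nonneg (by linarith) hP0.le
      simp only [htdef]
      nlinarith [hS1]
  -- reduce to bounding each spectral value
  rw [qSpec, spectralRadius]
  refine iSup₂_le fun μ hμ => ?_
  rw [← ENNReal.ofReal_coe_nnreal, coe_nnnorm]
  refine ENNReal.ofReal_le_ofReal ?_
  -- extract an eigenvector
  have hμ' : μ ∈ spectrum ℂ (Matrix.toLinAlgEquiv' (signlessLaplacian E)) := by
    rwa [AlgEquiv.spectrum_eq]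
  have he : Module.End.HasEigenvalue (Matrix.toLinAlgEquiv' (signlessLaplacian E)) μ :=
    Module.End.HasEigenvalue.of_mem_spectrum hμ'
  obtain ⟨x, hx⟩ := he.exists_hasEigenvector
  have hx0 : x ≠ 0 := hx.right
  have hxe : (signlessLaplacian E) *ᵥ x = μ • x := by
    have := hx.apply_eq_smul
    rwa [Matrix.toLinAlgEquiv'_apply] at this
  obtain ⟨v₀, hv₀⟩ : ∃ v, x v ≠ 0 := by
    by_contra h
    push_neg at h
    exact hx0 (funext h)
  have hne : Nonempty V := ⟨v₀⟩
  -- row expansion of the signless Laplacian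
  have hrow : ∀ u, (signlessLaplacian E *ᵥ x) u =
      (outDeg E u : ℂ) * x u + ∑ v ∈ Finset.univ.filter (fun v => E u v), x v := by
    intro u
    simp only [signlessLaplacian, Matrix.add_mulVec, Pi.add_apply]
    congr 1
    · simp [Matrix.mulVec, dotProduct, Matrix.diagonal_apply, ite_mul,
        Finset.sum_ite_eq (ι := V)]
    · simp only [Matrix.mulVec, dotProduct, Matrix.of_apply, ite_mul, one_mul,
        zero_mul]
      rw [Finset.sum_filter]
  by_cases hV : Nontrivial V
  · -- main case: every outdegree is at least 1
    have hd1 : ∀ v : V, 1 ≤ outDeg E v := by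
      intro v
      obtain ⟨w, hw⟩ := exists_ne v
      rcases (hsc v w).cases_head with h | ⟨z, hz, -⟩
      · exact absurd h.symm hw
      · refine Finset.card_pos.mpr ⟨z, ?_⟩
        simp [hz]
    have hdpos : ∀ v : V, (0 : ℝ) < (outDeg E v : ℝ) := by
      intro v; exact_mod_cast hd1 v
    obtain ⟨u, -, hmax⟩ :=
      Finset.exists_max_image Finset.univ (fun v => ‖x v‖ / (outDeg E v : ℝ))
        Finset.univ_nonempty
    set c : ℝ := ‖x u‖ / (outDeg E u : ℝ) with hc
    have hcv : ∀ v, ‖x v‖ ≤ c * (outDeg E v : ℝ) := by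
      intro v
      have := hmax v (Finset.mem_univ v)
      exact (div_le_iff₀ (hdpos v)).mp this
    have hc0 : 0 < c := by
      have h1 : 0 < ‖x v₀‖ / (outDeg E v₀ : ℝ) :=
        div_pos (norm_pos_iff.mpr hv₀) (hdpos v₀)
      exact lt_of_lt_of_le h1 (hmax v₀ (Finset.mem_univ v₀))
    have hxu : ‖x u‖ = c * (outDeg E u : ℝ) := by
      rw [hc, div_mul_cancel₀]
      exact (hdpos u).ne'
    -- degree bounds
    have hdle : ∀ v, (outDeg E v : ℝ) ≤ M - K := by
      intro v
      have h1 : outDeg E v ≤ m - k := le_trans (Finset.le_sup (Finset.mem_univ v)) hΔ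
      have := Nat.cast_le (α := ℝ) |>.mpr h1
      rwa [Nat.cast_sub hkm] at this
    set N : Finset V := Finset.univ.filter (fun v => E u v) with hN
    have hcardN : N.card = outDeg E u := rfl
    set s : ℕ := ∑ v ∈ N, outDeg E v with hs
    have hs1 : (s : ℝ) ≤ (outDeg E u : ℝ) * (M - K) := by
      have : ∀ v ∈ N, (outDeg E v : ℝ) ≤ M - K := fun v _ => hdle v
      calc (s : ℝ) = ∑ v ∈ N, (outDeg E v : ℝ) := by rw [hs]; push_cast; rfl
        _ ≤ ∑ _v ∈ N, (M - K) := Finset.sum_le_sum this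
        _ = (outDeg E u : ℝ) * (M - K) := by
            rw [Finset.sum_const, hcardN, nsmul_eq_mul]
    have hs2 : (s : ℝ) + (outDeg E u : ℝ) ≤ M := by
      have hu : u ∉ N := by simp [hN, hsimple u]
      have h1 : s + outDeg E u = ∑ v ∈ insert u N, outDeg E v := by
        rw [Finset.sum_insert hu, hs]; ring
      have h2 : ∑ v ∈ insert u N, outDeg E v ≤ ∑ v, outDeg E v :=
        Finset.sum_le_sum_of_subset (Finset.subset_univ _)
      have h3 : s + outDeg E u ≤ m := by rw [h1, hm]; exact h2
      rw [hM]; exact_mod_cast h3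
    -- the eigenvalue inequality
    have hsum : ∑ v ∈ N, ‖x v‖ ≤ c * s := by
      calc ∑ v ∈ N, ‖x v‖ ≤ ∑ v ∈ N, c * (outDeg E v : ℝ) :=
            Finset.sum_le_sum fun v _ => hcv v
        _ = c * s := by rw [hs]; push_cast; rw [Finset.mul_sum]
    have hmain : ‖μ‖ * (c * (outDeg E u : ℝ)) ≤
        c * ((outDeg E u : ℝ) ^ 2 + (s : ℝ)) := by
      have h1 : ‖μ‖ * (c * (outDeg E u : ℝ)) = ‖μ * x u‖ := by
        rw [norm_mul, hxu]
      have h2 : μ * x u = (signlessLaplacian E *ᵥ x) u := by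
        rw [hxe]; simp
      rw [h1, h2, hrow u]
      calc ‖(outDeg E u : ℂ) * x u + ∑ v ∈ N, x v‖
          ≤ ‖(outDeg E u : ℂ) * x u‖ + ‖∑ v ∈ N, x v‖ := norm_add_le _ _
        _ ≤ (outDeg E u : ℝ) * ‖x u‖ + ∑ v ∈ N, ‖x v‖ := by
            gcongr
            · rw [norm_mul]
              simp
            · exact norm_sum_le _ _
        _ ≤ (outDeg E u : ℝ) * (c * (outDeg E u : ℝ)) + c * s := by
            rw [hxu]; exact add_le_add_right hsum _
        _ = c * ((outDeg E u : ℝ) ^ 2 + (s : ℝ)) := by ring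
    have hkey : (outDeg E u : ℝ) ^ 2 + (s : ℝ) ≤ t * (outDeg E u : ℝ) := by
      refine key _ _ ?_ (hdle u) hs1 hs2
      have h12 : outDeg E u = 1 ∨ 2 ≤ outDeg E u := by
        have := hd1 u; omega
      rcases h12 with h | h
      · left; rw [h]; norm_num
      · right; exact_mod_cast h
    have hfin : ‖μ‖ * (c * (outDeg E u : ℝ)) ≤ t * (c * (outDeg E u : ℝ)) := by
      calc ‖μ‖ * (c * (outDeg E u : ℝ)) ≤ c * ((outDeg E u : ℝ) ^ 2 + (s : ℝ)) := hmain
        _ ≤ c * (t * (outDeg E u : ℝ)) := by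
            exact mul_le_mul_of_nonneg_left hkey hc0.le
        _ = t * (c * (outDeg E u : ℝ)) := by ring
    have hcd : 0 < c * (outDeg E u : ℝ) := mul_pos hc0 (hdpos u)
    exact le_of_mul_le_mul_right (by linarith [hfin]) hcd
  · -- subsingleton case: the matrix is zero, so μ = 0
    have hss : Subsingleton V := not_nontrivial_iff_subsingleton.mp hV
    have hQ0 : signlessLaplacian E = 0 := by
      ext a b
      have hab : a = b := Subsingleton.elim a b
      subst hab
      have hout : outDeg E a = 0 := by
        rw [outDeg, Finset.card_eq_zero, Finset.filter_eq_empty_iff]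
        intro w _
        rw [Subsingleton.elim w a]
        exact hsimple a
      simp [signlessLaplacian, Matrix.diagonal_apply, hout, hsimple a]
    have : μ • x = 0 := by rw [← hxe, hQ0, Matrix.zero_mulVec]
    rcases smul_eq_zero.mp this with h | h
    · rw [h]; simpa using htnonneg
    · exact absurd h hx0
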